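/- In A, the Casimir element C commutes with h: h·C = C·h. -/
import Mathlib


/-- the Casimir element `C = 2·e·f − h + (q/2)·h²` commutes with `h`:
`h·C = C·h`. -/
theorem jz_casimir_commutes_h {A : Type*} [Ring A] [Algebra ℂ A]
    (q : ℂ) (hq : q ≠ 0) (e f h : A)
    (rel1 : q • (h * e) - e * h = 2 * e)
    (rel2 : h * f - q • (f * h) = -(2 * f))
    (rel3 : e * f - q • (f * e) = h + ((1 - q) / 4) • h ^ 2)
    (C : A) (hC : C = 2 * (e * f) - h + (q / 2) • h ^ 2) :
    h * C = C * h := by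
  have e1 : q • (h * e) = 2 * e + e * h := by
    rw [← rel1]; abel
  have e2 : h * f = -(2 * f) + q • (f * h) := sub_eq_iff_eq_add.mp rel2
  have h1 : q • (h * (e * f)) = q • ((e * f) * h) := by
    calc q • (h * (e * f)) = (q • (h * e)) * f := by
          rw [smul_mul_assoc, mul_assoc]
      _ = (2 * e + e * h) * f := by rw [e1]
      _ = 2 * (e * f) + e * (h * f) := by noncomm_ring
      _ = 2 * (e * f) + e * (-(2 * f) + q • (f * h)) := by rw [e2]
      _ = 2 * (e * f) + (-(2 * (e * f)) + q • (e * (f * h))) := by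
          rw [mul_add, mul_smul_comm]; noncomm_ring
      _ = q • ((e * f) * h) := by rw [mul_assoc]; abel
  have key : h * (e * f) = (e * f) * h := by
    have := congrArg (fun x => q⁻¹ • x) h1
    simpa [smul_smul, inv_mul_cancel₀ hq] using this
  rw [hC]
  calc h * (2 * (e * f) - h + (q / 2) • h ^ 2)
      = 2 * (h * (e * f)) - h * h + (q / 2) • (h * h ^ 2) := by
        rw [mul_add, mul_sub, mul_smul_comm]; noncomm_ring
    _ = 2 * ((e * f) * h) - h * h + (q / 2) • (h ^ 2 * h) := by
        rw [key]; congr 2; noncomm_ring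
    _ = (2 * (e * f) - h + (q / 2) • h ^ 2) * h := by
        rw [add_mul, sub_mul, smul_mul_assoc]; noncomm_ring
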